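/- Let Q be an NQPR in dimension d ≥ 2 that is group covariant, i.e., for all indices j, k there exist a d×d unitary matrix U and a permutation σ of the index set with σ(j) = k and U Q_i U† = Q_{σ(i)} for all i. Then min_j λ_min(Q_j) = −((d−1)√(d+1) − 1)/d holds if and only if there exists a SIC Π_1, …, Π_{d²} in dimension d such that Q_j = −√(d+1)·Π_j + ((1 + √(d+1))/d)·I for every j. -/

import Mathlib

open Matrix

section helpers

variable {n : Type*} [Fintype n] [DecidableEq n] {A : Matrix n n ℂ}

private lemma conj_mul_conj' {U : Matrix n n ℂ} (h2 : star U * U = 1) (Y Z : Matrix n n ℂ) :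
    (U * Y * star U) * (U * Z * star U) = U * (Y * Z) * star U :=
  calc (U * Y * star U) * (U * Z * star U) = U * Y * ((star U * U) * (Z * star U)) := by
        simp only [mul_assoc]
    _ = U * (Y * Z) * star U := by rw [h2, one_mul]; simp only [mul_assoc]

private lemma conj_eq_zero' {U M : Matrix n n ℂ} (h2 : star U * U = 1)
    (h : U * M * star U = 0) : M = 0 := by
  have : M = star U * (U * M * star U) * U := by
    calc M = 1 * M * 1 := by simp
    _ = (star U * U) * M * (star U * U) := by rw [h2]
    _ = star U * (U * M * star U) * U := by simp only [mul_assoc]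
  rw [this, h]; simp

private lemma sub_smul_conj' (hA : A.IsHermitian) (c : ℂ) :
    A - c • 1 = (hA.eigenvectorUnitary : Matrix n n ℂ) *
      (diagonal (RCLike.ofReal ∘ hA.eigenvalues) - c • 1) *
      (star hA.eigenvectorUnitary : Matrix n n ℂ) := by
  have h1 : (hA.eigenvectorUnitary : Matrix n n ℂ) *
      (star hA.eigenvectorUnitary : Matrix n n ℂ) = 1 :=
    (Matrix.mem_unitaryGroup_iff).mp hA.eigenvectorUnitary.2
  calc A - c • 1 = (hA.eigenvectorUnitary : Matrix n n ℂ) *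
        diagonal (RCLike.ofReal ∘ hA.eigenvalues) *
        (star hA.eigenvectorUnitary : Matrix n n ℂ) -
        c • ((hA.eigenvectorUnitary : Matrix n n ℂ) * 1 *
          (star hA.eigenvectorUnitary : Matrix n n ℂ)) := by
        rw [mul_one, h1]; conv_lhs => rw [hA.spectral_theorem, Unitary.conjStarAlgAut_apply]
    _ = _ := by rw [Matrix.mul_sub, Matrix.sub_mul]; rw [Matrix.mul_smul, Matrix.smul_mul]

private lemma diag_sub_mul' (e : n → ℝ) (a b : ℝ) :
    (diagonal (RCLike.ofReal ∘ e) - (a:ℂ) • 1) * (diagonal (RCLike.ofReal ∘ e) - (b:ℂ) • 1) =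
      diagonal (fun i => ((e i : ℂ) - a) * ((e i : ℂ) - b)) := by
  rw [Matrix.smul_one_eq_diagonal, Matrix.smul_one_eq_diagonal, Matrix.diagonal_sub,
    Matrix.diagonal_sub, Matrix.diagonal_mul_diagonal]
  rfl

private lemma quad_iff' (hA : A.IsHermitian) (a b : ℝ) :
    (A - (a : ℂ) • 1) * (A - (b : ℂ) • 1) = 0 ↔
      ∀ i, (hA.eigenvalues i - a) * (hA.eigenvalues i - b) = 0 := by
  have h2 : (star hA.eigenvectorUnitary : Matrix n n ℂ) *
      (hA.eigenvectorUnitary : Matrix n n ℂ) = 1 :=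
    (Matrix.mem_unitaryGroup_iff').mp hA.eigenvectorUnitary.2
  have key : (A - (a : ℂ) • 1) * (A - (b : ℂ) • 1) =
      (hA.eigenvectorUnitary : Matrix n n ℂ) *
      (diagonal (fun i => ((hA.eigenvalues i : ℂ) - a) * ((hA.eigenvalues i : ℂ) - b))) *
      (star hA.eigenvectorUnitary : Matrix n n ℂ) := by
    rw [sub_smul_conj' hA a, sub_smul_conj' hA b, conj_mul_conj' h2, diag_sub_mul']
  rw [key]
  constructor
  · intro h i
    have h0 := conj_eq_zero' h2 h
    have h1 := congrFun (congrFun h0 i) i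
    rw [Matrix.diagonal_apply_eq] at h1
    have h3 : (((hA.eigenvalues i - a) * (hA.eigenvalues i - b) : ℝ) : ℂ) = 0 := by
      push_cast; simpa using h1
    exact_mod_cast h3
  · intro h
    have h0 : (diagonal (fun i => ((hA.eigenvalues i : ℂ) - a) * ((hA.eigenvalues i : ℂ) - b)) :
        Matrix n n ℂ) = 0 := by
      ext i j
      by_cases hij : i = j
      · subst hij
        rw [Matrix.diagonal_apply_eq]
        have h3 : (((hA.eigenvalues i - a) * (hA.eigenvalues i - b) : ℝ) : ℂ) = 0 := by
          rw [h i]; simp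
        push_cast at h3
        simpa using h3
      · simp [Matrix.diagonal_apply_ne _ hij]
    rw [h0, mul_zero, zero_mul]

private lemma trace_eq_sum_eig' (hA : A.IsHermitian) :
    A.trace = ∑ i, (hA.eigenvalues i : ℂ) := by
  have h2 : (star hA.eigenvectorUnitary : Matrix n n ℂ) *
      (hA.eigenvectorUnitary : Matrix n n ℂ) = 1 :=
    (Matrix.mem_unitaryGroup_iff').mp hA.eigenvectorUnitary.2
  conv_lhs => rw [hA.spectral_theorem, Unitary.conjStarAlgAut_apply]
  rw [Matrix.trace_mul_cycle, h2, one_mul, Matrix.trace_diagonal]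
  rfl

private lemma trace_sq_eq_sum_eig_sq' (hA : A.IsHermitian) :
    (A * A).trace = ∑ i, ((hA.eigenvalues i : ℂ))^2 := by
  have h2 : (star hA.eigenvectorUnitary : Matrix n n ℂ) *
      (hA.eigenvectorUnitary : Matrix n n ℂ) = 1 :=
    (Matrix.mem_unitaryGroup_iff').mp hA.eigenvectorUnitary.2
  conv_lhs => rw [hA.spectral_theorem, Unitary.conjStarAlgAut_apply]
  rw [conj_mul_conj' h2, Matrix.trace_mul_cycle, h2, one_mul, Matrix.diagonal_mul_diagonal,
    Matrix.trace_diagonal]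
  congr 1 with i
  simp [sq]

private lemma fin_iInf_eq {ι : Type*} [Finite ι] [Nonempty ι] (f : ι → ℝ) :
    ∃ i, (⨅ j, f j) = f i ∧ ∀ j, f i ≤ f j := by
  obtain ⟨i, hi⟩ := Finite.exists_min f
  exact ⟨i, le_antisymm (ciInf_le (Set.finite_range f).bddBelow i) (le_ciInf hi), hi⟩

end helpers

set_option maxHeartbeats 2000000 in
/-- For a group-covariant NQPR `Q` in dimension `d ≥ 2`, the maximal negativity
`min_j λ_min(Q j) = −((d−1)√(d+1) − 1)/d` is attained iff there is a SIC `Π` such that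
`Q j = −√(d+1)·Π j + ((1 + √(d+1))/d)·I` for every `j`. -/
theorem stmt_5 (d : ℕ) (hd : 2 ≤ d)
    (Q : Fin (d ^ 2) → Matrix (Fin d) (Fin d) ℂ)
    (hherm : ∀ j, (Q j).IsHermitian)
    (htr : ∀ j, (Q j).trace = 1)
    (hpair : ∀ j k, (Q j * Q k).trace = if j = k then (d : ℂ) else 0)
    (hsum : ∑ j, Q j = (d : ℂ) • (1 : Matrix (Fin d) (Fin d) ℂ))
    (hcov : ∀ j k : Fin (d ^ 2), ∃ (U : Matrix (Fin d) (Fin d) ℂ)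
      (σ : Equiv.Perm (Fin (d ^ 2))),
        U * Uᴴ = 1 ∧ Uᴴ * U = 1 ∧ σ j = k ∧ ∀ i, U * Q i * Uᴴ = Q (σ i)) :
    (⨅ j, ⨅ i, (hherm j).eigenvalues i) = -((((d : ℝ) - 1) * Real.sqrt (d + 1) - 1) / d) ↔
      ∃ P : Fin (d ^ 2) → Matrix (Fin d) (Fin d) ℂ,
        (∀ j, (P j).IsHermitian) ∧
        (∀ j, P j * P j = P j) ∧
        (∀ j, (P j).trace = 1) ∧
        (∀ j k, (P j * P k).trace =
          ((d : ℂ) * (if j = k then 1 else 0) + 1) / ((d : ℂ) + 1)) ∧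
        (∀ j, Q j = -((Real.sqrt (d + 1) : ℂ)) • P j +
          (((1 + Real.sqrt (d + 1)) / d : ℝ) : ℂ) • (1 : Matrix (Fin d) (Fin d) ℂ)) := by
  have hd1 : (1:ℝ) ≤ d := by exact_mod_cast Nat.one_le_of_lt hd
  have hd2 : (2:ℝ) ≤ d := by exact_mod_cast hd
  have hd0 : (d:ℝ) ≠ 0 := by linarith
  have hd0c : (d:ℂ) ≠ 0 := by exact_mod_cast (Nat.cast_ne_zero (R := ℂ)).mpr (by omega)
  set s : ℝ := Real.sqrt (d + 1) with hs_def
  have hs2 : s ^ 2 = (d:ℝ) + 1 := Real.sq_sqrt (by positivity)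
  have hs0 : 0 < s := Real.sqrt_pos.mpr (by positivity)
  have hsne : s ≠ 0 := ne_of_gt hs0
  have hsnec : (s:ℂ) ≠ 0 := by exact_mod_cast hsne
  have hs2c : (s:ℂ) ^ 2 = (d:ℂ) + 1 := by exact_mod_cast hs2
  set lam : ℝ := (1 - ((d:ℝ) - 1) * s) / d with hlam_def
  set μ : ℝ := (1 + s) / d with hmu_def
  have hlam_eq : -((((d : ℝ) - 1) * s - 1) / d) = lam := by rw [hlam_def]; ring
  have hms : μ - lam = s := by rw [hmu_def, hlam_def]; field_simp; ring
  haveI : Nonempty (Fin d) := ⟨⟨0, by omega⟩⟩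
  haveI : Nonempty (Fin (d ^ 2)) := ⟨⟨0, by positivity⟩⟩
  -- eigenvalue sums
  have hsum_e : ∀ j, ∑ i, (hherm j).eigenvalues i = 1 := by
    intro j
    have h := (trace_eq_sum_eig' (hherm j)).symm.trans (htr j)
    have : ((∑ i, (hherm j).eigenvalues i : ℝ) : ℂ) = 1 := by push_cast; simpa using h
    exact_mod_cast this
  have hsq_e : ∀ j, ∑ i, ((hherm j).eigenvalues i) ^ 2 = d := by
    intro j
    have h := (trace_sq_eq_sum_eig_sq' (hherm j)).symm.trans (by simpa using hpair j j)
    have : ((∑ i, ((hherm j).eigenvalues i)^2 : ℝ) : ℂ) = (d:ℝ) := by push_cast; simpa using h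
    exact_mod_cast this
  -- the universal lower bound on eigenvalues
  have hlow : ∀ j i, lam ≤ (hherm j).eigenvalues i := by
    intro j i
    set e := (hherm j).eigenvalues with he
    set x := e i with hx
    have h1 : ∑ k ∈ Finset.univ.erase i, e k = 1 - x := by
      rw [Finset.sum_erase_eq_sub (Finset.mem_univ i), hsum_e j]
    have h2 : ∑ k ∈ Finset.univ.erase i, (e k)^2 = (d:ℝ) - x^2 := by
      rw [Finset.sum_erase_eq_sub (Finset.mem_univ i), hsq_e j]
    have hcard : ((Finset.univ.erase i).card : ℝ) = (d:ℝ) - 1 := by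
      rw [Finset.card_erase_of_mem (Finset.mem_univ i)]
      simp only [Finset.card_univ, Fintype.card_fin]
      have : 1 ≤ d := by omega
      push_cast [Nat.cast_sub this]
      ring
    have hCS := sq_sum_le_card_mul_sum_sq (s := Finset.univ.erase i) (f := e)
    rw [h1, h2, hcard] at hCS
    have hdpos : (0:ℝ) < d := by linarith
    rw [hlam_def, div_le_iff₀ hdpos]
    by_contra hcon
    push_neg at hcon
    have hds : (0:ℝ) ≤ ((d:ℝ) - 1) * s := mul_nonneg (by linarith) hs0.le
    have hA : (0:ℝ) < 1 - ((d:ℝ)-1)*s - x*d := by linarith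
    have hB : (0:ℝ) < 1 + ((d:ℝ)-1)*s - x*d := by linarith
    have hAB := mul_pos hA hB
    have hds2 : ((d:ℝ)-1)^2 * s^2 = ((d:ℝ)-1)^2 * ((d:ℝ)+1) := by rw [hs2]
    nlinarith [hAB, hds2, mul_le_mul_of_nonneg_left hCS (le_of_lt hdpos)]
  have hsc : (s:ℂ) = (μ:ℂ) - (lam:ℂ) := by
    rw [← hms]; push_cast; ring
  constructor
  · -- forward direction
    intro h
    rw [hlam_eq] at h
    obtain ⟨j₀, hj0, -⟩ := fin_iInf_eq (fun j => ⨅ i, (hherm j).eigenvalues i)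
    have hFj0 : (⨅ i, (hherm j₀).eigenvalues i) = lam := by rw [← hj0, h]
    obtain ⟨i₀, hi0, -⟩ := fin_iInf_eq ((hherm j₀).eigenvalues)
    have hei0 : (hherm j₀).eigenvalues i₀ = lam := by rw [← hi0, hFj0]
    -- all other eigenvalues of Q j₀ equal μ
    have hrest : ∀ k, k ≠ i₀ → (hherm j₀).eigenvalues k = μ := by
      have h1 : ∑ k ∈ Finset.univ.erase i₀, (hherm j₀).eigenvalues k = 1 - lam := by
        rw [Finset.sum_erase_eq_sub (Finset.mem_univ i₀), hsum_e j₀, hei0]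
      have h2 : ∑ k ∈ Finset.univ.erase i₀, ((hherm j₀).eigenvalues k)^2 = (d:ℝ) - lam^2 := by
        rw [Finset.sum_erase_eq_sub (Finset.mem_univ i₀), hsq_e j₀, hei0]
      have hcard : (((Finset.univ.erase i₀).card : ℕ) : ℝ) = (d:ℝ) - 1 := by
        rw [Finset.card_erase_of_mem (Finset.mem_univ i₀)]
        simp only [Finset.card_univ, Fintype.card_fin]
        have h1d : 1 ≤ d := by omega
        push_cast [Nat.cast_sub h1d]
        ring
      have hzero : ∑ k ∈ Finset.univ.erase i₀, ((hherm j₀).eigenvalues k - μ)^2 = 0 := by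
        have expand : ∑ k ∈ Finset.univ.erase i₀, ((hherm j₀).eigenvalues k - μ)^2 =
            (∑ k ∈ Finset.univ.erase i₀, ((hherm j₀).eigenvalues k)^2)
            - 2*μ*(∑ k ∈ Finset.univ.erase i₀, (hherm j₀).eigenvalues k)
            + ((Finset.univ.erase i₀).card : ℝ) * μ^2 := by
          rw [Finset.mul_sum, ← Finset.sum_sub_distrib]
          rw [show (((Finset.univ.erase i₀).card : ℕ) : ℝ) * μ^2 =
            ∑ _k ∈ Finset.univ.erase i₀, μ^2 by rw [Finset.sum_const, nsmul_eq_mul]]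
          rw [← Finset.sum_add_distrib]
          exact Finset.sum_congr rfl (fun k _ => by ring)
        rw [expand, h1, h2, hcard, hlam_def, hmu_def]
        field_simp
        ring_nf
        linear_combination ((d:ℝ) - (d:ℝ)^2) * hs2
      intro k hk
      have hmem : k ∈ Finset.univ.erase i₀ := Finset.mem_erase.mpr ⟨hk, Finset.mem_univ k⟩
      have := (Finset.sum_eq_zero_iff_of_nonneg (fun k _ => sq_nonneg _)).mp hzero k hmem
      have h0 : (hherm j₀).eigenvalues k - μ = 0 := by
        exact pow_eq_zero_iff (two_ne_zero) |>.mp this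
      linarith
    -- quadratic relation at j₀
    have hquad0 : (Q j₀ - (lam:ℂ) • 1) * (Q j₀ - (μ:ℂ) • 1) = 0 := by
      rw [quad_iff' (hherm j₀)]
      intro i
      by_cases hi : i = i₀
      · subst hi; rw [hei0]; simp
      · rw [hrest i hi]; simp
    -- transfer to all j by covariance
    have hquad : ∀ j, (Q j - (lam:ℂ) • 1) * (Q j - (μ:ℂ) • 1) = 0 := by
      intro j
      obtain ⟨U, σ, hU1, hU2, hσ, hUQ⟩ := hcov j₀ j
      have hQj : U * Q j₀ * Uᴴ = Q j := by rw [hUQ j₀, hσ]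
      have hstar2 : star U * U = 1 := by rw [Matrix.star_eq_conjTranspose]; exact hU2
      have hsub : ∀ c : ℂ, Q j - c • 1 = U * (Q j₀ - c • 1) * star U := by
        intro c
        rw [Matrix.star_eq_conjTranspose, Matrix.mul_sub, Matrix.sub_mul, hQj,
          Matrix.mul_smul, Matrix.smul_mul, mul_one, hU1]
      rw [hsub, hsub, conj_mul_conj' hstar2, hquad0, mul_zero, zero_mul]
    -- Q j * Q j in terms of Q j and 1
    have hQQ : ∀ j, Q j * Q j = ((lam:ℂ) + (μ:ℂ)) • Q j - ((lam:ℂ) * (μ:ℂ)) • 1 := by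
      intro j
      have expand : (Q j - (lam:ℂ) • 1) * (Q j - (μ:ℂ) • 1) =
          Q j * Q j - (μ:ℂ) • Q j - (lam:ℂ) • Q j + ((lam:ℂ) * (μ:ℂ)) • 1 := by
        simp only [Matrix.sub_mul, Matrix.mul_sub, Matrix.smul_mul, Matrix.mul_smul,
          one_mul, mul_one, smul_smul]
        module
      have h' := hquad j
      rw [expand] at h'
      calc Q j * Q j = Q j * Q j - (μ:ℂ) • Q j - (lam:ℂ) • Q j + ((lam:ℂ) * (μ:ℂ)) • 1
            + (μ:ℂ) • Q j + (lam:ℂ) • Q j - ((lam:ℂ) * (μ:ℂ)) • 1 := by abel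
        _ = ((lam:ℂ) + (μ:ℂ)) • Q j - ((lam:ℂ) * (μ:ℂ)) • 1 := by
            rw [h', add_smul]; abel
    refine ⟨fun j => ((s:ℂ))⁻¹ • ((μ:ℂ) • 1 - Q j), ?_, ?_, ?_, ?_, ?_⟩
    · -- Hermitian
      intro j
      have hstar_s : star ((s:ℂ))⁻¹ = ((s:ℂ))⁻¹ := by
        rw [star_inv₀]; congr 1; exact Complex.conj_ofReal s
      have hstar_mu : star ((μ:ℝ) : ℂ) = ((μ:ℝ) : ℂ) := Complex.conj_ofReal μ
      show (((s:ℂ))⁻¹ • ((μ:ℂ) • 1 - Q j))ᴴ = _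
      rw [Matrix.conjTranspose_smul, Matrix.conjTranspose_sub, Matrix.conjTranspose_smul,
        Matrix.conjTranspose_one, (hherm j).eq, hstar_s, hstar_mu]
    · -- idempotent
      intro j
      have hXX : ((μ:ℂ) • 1 - Q j) * ((μ:ℂ) • 1 - Q j) = (s:ℂ) • ((μ:ℂ) • 1 - Q j) := by
        rw [hsc]
        simp only [Matrix.sub_mul, Matrix.mul_sub, Matrix.smul_mul, Matrix.mul_smul,
          one_mul, mul_one, smul_smul]
        rw [hQQ j]
        module
      rw [Matrix.smul_mul, Matrix.mul_smul, smul_smul, hXX, smul_smul, mul_assoc,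
        inv_mul_cancel₀ hsnec, mul_one]
    · -- trace
      intro j
      rw [Matrix.trace_smul, Matrix.trace_sub, Matrix.trace_smul, Matrix.trace_one, htr j]
      simp only [Fintype.card_fin, smul_eq_mul]
      rw [hmu_def]
      push_cast
      field_simp
      ring
    · -- pairwise traces
      intro j k
      have hprod : (((s:ℂ))⁻¹ • ((μ:ℂ) • 1 - Q j)) * (((s:ℂ))⁻¹ • ((μ:ℂ) • 1 - Q k)) =
          (((s:ℂ))⁻¹ * ((s:ℂ))⁻¹) • (((μ:ℂ) * (μ:ℂ)) • 1 - (μ:ℂ) • Q k - (μ:ℂ) • Q j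
            + Q j * Q k) := by
        rw [Matrix.smul_mul, Matrix.mul_smul, smul_smul]
        congr 1
        simp only [Matrix.sub_mul, Matrix.mul_sub, Matrix.smul_mul, Matrix.mul_smul,
          one_mul, mul_one, smul_smul]
        module
      rw [hprod, Matrix.trace_smul, Matrix.trace_add, Matrix.trace_sub, Matrix.trace_sub,
        Matrix.trace_smul, Matrix.trace_smul, Matrix.trace_smul, Matrix.trace_one, htr j, htr k,
        hpair j k]
      simp only [Fintype.card_fin, smul_eq_mul, mul_one]
      have hmu_c : ((μ:ℝ) : ℂ) = (1 + (s:ℂ)) / (d:ℂ) := by rw [hmu_def]; push_cast; ring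
      have hss : ((s:ℂ))⁻¹ * ((s:ℂ))⁻¹ = ((d:ℂ)+1)⁻¹ := by rw [← mul_inv, ← sq, hs2c]
      have hd1c : (d:ℂ) + 1 ≠ 0 := by
        rw [← hs2c]; exact pow_ne_zero 2 hsnec
      by_cases hjk : j = k
      · subst hjk
        simp only [if_pos rfl]
        rw [hmu_c, hss]
        have h45 : (d:ℂ)^4 + (d:ℂ)^5 ≠ 0 := by
          have h45' : (d:ℂ)^4 + (d:ℂ)^5 = (d:ℂ)^4 * ((d:ℂ)+1) := by ring
          rw [h45']; exact mul_ne_zero (pow_ne_zero _ hd0c) hd1c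
        field_simp [hd0c, hd1c]
        ring_nf
        rw [hs2c]
        field_simp [h45]
        ring
        rw [if_pos trivial, if_pos trivial]
        ring
      · simp only [if_neg hjk]
        rw [hmu_c, hss]
        have h45 : (d:ℂ)^4 + (d:ℂ)^5 ≠ 0 := by
          have h45' : (d:ℂ)^4 + (d:ℂ)^5 = (d:ℂ)^4 * ((d:ℂ)+1) := by ring
          rw [h45']; exact mul_ne_zero (pow_ne_zero _ hd0c) hd1c
        field_simp [hd0c, hd1c]
        ring_nf
        rw [hs2c]
        field_simp [h45]
        ring
    · -- the formula for Q j
      intro j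
      rw [smul_smul]
      have : -(s:ℂ) * ((s:ℂ))⁻¹ = -1 := by field_simp
      rw [this, neg_one_smul]
      abel
  · -- backward direction
    rintro ⟨P, hPh, hPP, hPtr, hPpair, hPQ⟩
    rw [hlam_eq]
    have hquad : ∀ j, (Q j - (lam:ℂ) • 1) * (Q j - (μ:ℂ) • 1) = 0 := by
      intro j
      have h1 : Q j - (μ:ℂ) • 1 = (-(s:ℂ)) • P j := by
        rw [hPQ j]; module
      have h2 : Q j - (lam:ℂ) • 1 = (s:ℂ) • (1 - P j) := by
        rw [hPQ j, hsc]; module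
      rw [h1, h2, Matrix.smul_mul, Matrix.mul_smul, smul_smul, Matrix.sub_mul, one_mul,
        hPP j, sub_self, smul_zero]
    have hlam_lt : lam < μ := by
      have := hms; linarith
    have hFj : ∀ j, (⨅ i, (hherm j).eigenvalues i) = lam := by
      intro j
      have heig := (quad_iff' (hherm j) lam μ).mp (hquad j)
      have heig' : ∀ i, (hherm j).eigenvalues i = lam ∨ (hherm j).eigenvalues i = μ := by
        intro i
        rcases mul_eq_zero.mp (heig i) with h | h
        · left; linarith [sub_eq_zero.mp h]
        · right; linarith [sub_eq_zero.mp h]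
      have hlb : ∀ i, lam ≤ (hherm j).eigenvalues i := by
        intro i
        rcases heig' i with h | h
        · rw [h]
        · rw [h]; exact le_of_lt hlam_lt
      have hex : ∃ i, (hherm j).eigenvalues i = lam := by
        by_contra hne
        push_neg at hne
        have hall : ∀ i, (hherm j).eigenvalues i = μ := fun i => (heig' i).resolve_left (hne i)
        have hsum' : ∑ i, (hherm j).eigenvalues i = (d:ℝ) * μ := by
          rw [Finset.sum_congr rfl (fun i _ => hall i), Finset.sum_const, Finset.card_univ,
            Fintype.card_fin, nsmul_eq_mul]
        rw [hsum_e j] at hsum'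
        have hdmu : (d:ℝ) * μ = 1 + s := by rw [hmu_def]; field_simp
        rw [hdmu] at hsum'
        linarith
      obtain ⟨i, hi⟩ := hex
      exact le_antisymm (hi ▸ ciInf_le (Set.finite_range _).bddBelow i) (le_ciInf hlb)
    rw [iInf_congr hFj, ciInf_const]
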